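/- (Theorem 1, operator form) With P = Σ_{j=1}^d |e_j⟩⟨e_j| ⊗ |e_j⟩⟨e_j| and Q = Σ_{α=1}^d |â_α⟩⟨â_α| ⊗ |ψ_α⟩⟨ψ_α|, one has the operator inequality 𝟙 − |ψ⟩⟨ψ| ≤ (𝟙 − P) + (𝟙 − Q) in the Loewner (positive semidefinite) order on operators on ℂ^d ⊗ ℂ^d. -/

import Mathlib

open Matrix Kronecker
open scoped BigOperators ComplexOrder

noncomputable section

/-- Standard basis vector `e_j` of `ℂ^d`. -/
def eVec (d : ℕ) (j : Fin d) : Fin d → ℂ := fun k => if k = j then 1 else 0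

/-- Elementary tensor of two vectors in `ℂ^d`. -/
def tensorVec {d : ℕ} (v w : Fin d → ℂ) : Fin d × Fin d → ℂ := fun p => v p.1 * w p.2

/-- Outer product `|v⟩⟨w|`. -/
def outer {n : Type*} (v w : n → ℂ) : Matrix n n ℂ := Matrix.vecMulVec v (star w)

/-- Conjugate (mutually unbiased) basis vectors `â_α`. -/
def ahat (d : ℕ) (phi : Fin d → Fin d → ℝ) (α : Fin d) : Fin d → ℂ :=
  fun j => ((1 / Real.sqrt d : ℝ) : ℂ) * Complex.exp (Complex.I * (phi j α : ℂ))

/-- The unit vectors `ψ_α = Σ_j √λ_j e^{-iφ(j,α)} e_j`. -/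
def psiAlpha (d : ℕ) (lam : Fin d → ℝ) (phi : Fin d → Fin d → ℝ) (α : Fin d) : Fin d → ℂ :=
  fun j => ((Real.sqrt (lam j) : ℝ) : ℂ) * Complex.exp (-Complex.I * (phi j α : ℂ))

/-- The Schmidt-form state `ψ = Σ_j √λ_j e_j ⊗ e_j` in `ℂ^d ⊗ ℂ^d`. -/
def psiVec (d : ℕ) (lam : Fin d → ℝ) : Fin d × Fin d → ℂ :=
  ∑ j, ((Real.sqrt (lam j) : ℝ) : ℂ) • tensorVec (eVec d j) (eVec d j)

/-- The projector `P = Σ_j |e_j⟩⟨e_j| ⊗ |e_j⟩⟨e_j|`. -/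
def Pop (d : ℕ) : Matrix (Fin d × Fin d) (Fin d × Fin d) ℂ :=
  ∑ j, (outer (eVec d j) (eVec d j)) ⊗ₖ (outer (eVec d j) (eVec d j))

/-- The projector `Q = Σ_α |â_α⟩⟨â_α| ⊗ |ψ_α⟩⟨ψ_α|`. -/
def Qop (d : ℕ) (lam : Fin d → ℝ) (phi : Fin d → Fin d → ℝ) :
    Matrix (Fin d × Fin d) (Fin d × Fin d) ℂ :=
  ∑ α, (outer (ahat d phi α) (ahat d phi α)) ⊗ₖ
      (outer (psiAlpha d lam phi α) (psiAlpha d lam phi α))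

lemma outer_apply {n : Type*} (v w : n → ℂ) (i j : n) :
    outer v w i j = v i * (starRingEnd ℂ) (w j) := rfl

lemma outer_mul_outer {n : Type*} [Fintype n] (v w x y : n → ℂ) :
    outer v w * outer x y = (star w ⬝ᵥ x) • outer v y := by
  ext i j
  simp only [mul_apply, outer, vecMulVec_apply, Matrix.smul_apply, dotProduct, Pi.star_apply,
    smul_eq_mul, RCLike.star_def]
  rw [Finset.sum_mul]
  exact Finset.sum_congr rfl fun k _ => by ring

lemma outer_conjTranspose {n : Type*} (v w : n → ℂ) : (outer v w)ᴴ = outer w v := by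
  ext i j
  simp only [conjTranspose_apply, outer, vecMulVec_apply, Pi.star_apply, RCLike.star_def,
    _root_.map_mul, Complex.conj_conj]
  ring

lemma outer_tensor {d : ℕ} (v w x y : Fin d → ℂ) :
    outer (tensorVec v w) (tensorVec x y) = (outer v x) ⊗ₖ (outer w y) := by
  ext ⟨i1, i2⟩ ⟨j1, j2⟩
  simp only [outer, tensorVec, vecMulVec_apply, Pi.star_apply, RCLike.star_def, _root_.map_mul,
    kroneckerMap_apply]
  ring

lemma sum_smul_outer_left {n : Type*} {d : ℕ} (s : Finset (Fin d))
    (c : Fin d → ℂ) (f : Fin d → (n → ℂ)) (w : n → ℂ) :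
    ∑ j ∈ s, c j • outer (f j) w = outer (∑ j ∈ s, c j • f j) w := by
  ext i k
  simp only [outer, Matrix.sum_apply, Finset.sum_apply, Matrix.smul_apply, vecMulVec_apply, Pi.star_apply,
    smul_eq_mul, Pi.smul_apply, Finset.sum_mul]
  exact Finset.sum_congr rfl fun j _ => by ring

lemma sum_smul_outer_right {n : Type*} {d : ℕ} (s : Finset (Fin d))
    (c : Fin d → ℂ) (g : Fin d → (n → ℂ)) (v : n → ℂ) :
    ∑ j ∈ s, (starRingEnd ℂ (c j)) • outer v (g j) = outer v (∑ j ∈ s, c j • g j) := by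
  ext i k
  simp only [outer, Matrix.sum_apply, Finset.sum_apply, Matrix.smul_apply, vecMulVec_apply, Pi.star_apply,
    smul_eq_mul, Pi.smul_apply, RCLike.star_def, map_sum, _root_.map_mul, Finset.mul_sum]
  exact Finset.sum_congr rfl fun j _ => by ring

section
variable {d : ℕ} (lam : Fin d → ℝ) (phi : Fin d → Fin d → ℝ)

lemma tensor_single (j k : Fin d) :
    tensorVec (eVec d j) (eVec d k) = fun p => if p = (j, k) then 1 else 0 := by
  funext p
  by_cases h1 : p.1 = j <;> by_cases h2 : p.2 = k <;>
    simp [tensorVec, eVec, Prod.ext_iff, h1, h2]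

lemma star_tensor_single (j k : Fin d) :
    star (tensorVec (eVec d j) (eVec d k)) = fun p => if p = (j, k) then 1 else 0 := by
  rw [tensor_single]
  funext p
  simp [apply_ite (starRingEnd ℂ)]

lemma dot_single_left (j k : Fin d) (v : Fin d × Fin d → ℂ) :
    star (tensorVec (eVec d j) (eVec d k)) ⬝ᵥ v = v (j, k) := by
  rw [star_tensor_single]
  simp [dotProduct, ite_mul]

lemma dot_single_right (j k : Fin d) (v : Fin d × Fin d → ℂ) :
    star v ⬝ᵥ tensorVec (eVec d j) (eVec d k) = (starRingEnd ℂ) (v (j, k)) := by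
  rw [tensor_single]
  simp [dotProduct, mul_ite]

lemma dot_tensor (a b c e : Fin d → ℂ) :
    star (tensorVec a b) ⬝ᵥ tensorVec c e = (star a ⬝ᵥ c) * (star b ⬝ᵥ e) := by
  rw [dotProduct, dotProduct, dotProduct, Fintype.sum_prod_type, Finset.sum_mul]
  refine Finset.sum_congr rfl fun j _ => ?_
  rw [Finset.mul_sum]
  refine Finset.sum_congr rfl fun k _ => ?_
  simp only [Pi.star_apply, tensorVec, RCLike.star_def, _root_.map_mul]
  ring

lemma psiVec_apply (p : Fin d × Fin d) :
    psiVec d lam p = if p.1 = p.2 then ((Real.sqrt (lam p.1) : ℝ) : ℂ) else 0 := by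
  obtain ⟨p1, p2⟩ := p
  simp only [psiVec, Finset.sum_apply, Pi.smul_apply, tensor_single, smul_eq_mul,
    mul_ite, mul_one, mul_zero, Prod.mk.injEq]
  by_cases h : p1 = p2
  · subst h
    simp [eq_comm]
  · simp [h, fun l => show ¬(p1 = l ∧ p2 = l) from fun ⟨h1, h2⟩ => h (h1.trans h2.symm)]

end

section
variable {d : ℕ} (lam : Fin d → ℝ) (phi : Fin d → Fin d → ℝ)

lemma exp_cancel (x : ℂ) :
    Complex.exp (Complex.I * x) * Complex.exp (-Complex.I * x) = 1 := by
  rw [← Complex.exp_add]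
  ring_nf
  exact Complex.exp_zero

lemma conj_ahat (α j : Fin d) :
    (starRingEnd ℂ) (ahat d phi α j)
      = ((1 / Real.sqrt d : ℝ) : ℂ) * Complex.exp (-Complex.I * (phi j α : ℂ)) := by
  rw [ahat, _root_.map_mul, Complex.conj_ofReal, ← Complex.exp_conj, _root_.map_mul,
    Complex.conj_I, Complex.conj_ofReal]

lemma conj_psiAlpha (α j : Fin d) :
    (starRingEnd ℂ) (psiAlpha d lam phi α j)
      = ((Real.sqrt (lam j) : ℝ) : ℂ) * Complex.exp (Complex.I * (phi j α : ℂ)) := by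
  rw [psiAlpha, _root_.map_mul, Complex.conj_ofReal, ← Complex.exp_conj, _root_.map_mul,
    map_neg, Complex.conj_I, Complex.conj_ofReal, neg_neg]

lemma psiAlpha_eq (hd : 1 ≤ d) (α k : Fin d) :
    psiAlpha d lam phi α k
      = ((Real.sqrt (lam k) : ℝ) : ℂ) * ((Real.sqrt d : ℝ) : ℂ)
        * (starRingEnd ℂ) (ahat d phi α k) := by
  rw [conj_ahat, psiAlpha]
  have hne : ((Real.sqrt d : ℝ) : ℂ) ≠ 0 := by
    simp only [ne_eq, Complex.ofReal_eq_zero]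
    exact Real.sqrt_ne_zero'.mpr (by exact_mod_cast Nat.lt_of_lt_of_le Nat.zero_lt_one hd)
  push_cast
  field_simp

lemma dot_psiAlpha_self (hlam : ∀ j, 0 ≤ lam j) (hsum : ∑ j, lam j = 1) (α : Fin d) :
    star (psiAlpha d lam phi α) ⬝ᵥ psiAlpha d lam phi α = 1 := by
  rw [dotProduct]
  have h1 : ∀ j, star (psiAlpha d lam phi α) j * psiAlpha d lam phi α j = ((lam j : ℝ) : ℂ) := by
    intro j
    simp only [Pi.star_apply, RCLike.star_def, conj_psiAlpha]
    rw [psiAlpha]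
    have e := exp_cancel ((phi j α : ℝ) : ℂ)
    have s : Real.sqrt (lam j) * Real.sqrt (lam j) = lam j := Real.mul_self_sqrt (hlam j)
    have hs' : ((Real.sqrt (lam j) : ℝ) : ℂ) * ((Real.sqrt (lam j) : ℝ) : ℂ) = ((lam j : ℝ) : ℂ) := by
      exact_mod_cast congrArg Complex.ofReal s
    linear_combination (((Real.sqrt (lam j) : ℝ) : ℂ) * ((Real.sqrt (lam j) : ℝ) : ℂ)) * e + hs'
  simp only [h1]
  exact_mod_cast congrArg (Complex.ofReal) hsum

lemma dot_psi_self (hlam : ∀ j, 0 ≤ lam j) (hsum : ∑ j, lam j = 1) :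
    star (psiVec d lam) ⬝ᵥ psiVec d lam = 1 := by
  rw [dotProduct, Fintype.sum_prod_type]
  have h1 : ∀ j k : Fin d, star (psiVec d lam) (j, k) * psiVec d lam (j, k)
      = if j = k then ((lam j : ℝ) : ℂ) else 0 := by
    intro j k
    simp only [Pi.star_apply, RCLike.star_def, psiVec_apply]
    by_cases h : j = k
    · simp [h, Complex.conj_ofReal, ← Complex.ofReal_mul, Real.mul_self_sqrt (hlam k)]
    · simp [h]
  simp only [h1, Finset.sum_ite_eq, Finset.mem_univ, if_true]
  exact_mod_cast congrArg (Complex.ofReal) hsum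

end

def tvD (d : ℕ) (j : Fin d) : Fin d × Fin d → ℂ := tensorVec (eVec d j) (eVec d j)

def taD (d : ℕ) (lam : Fin d → ℝ) (phi : Fin d → Fin d → ℝ) (α : Fin d) : Fin d × Fin d → ℂ :=
  tensorVec (ahat d phi α) (psiAlpha d lam phi α)

lemma sum_smul_outer_right_real {n : Type*} {d : ℕ} (c : Fin d → ℝ) (g : Fin d → (n → ℂ))
    (v : n → ℂ) :
    ∑ j, ((c j : ℝ) : ℂ) • outer v (g j) = outer v (∑ j, ((c j : ℝ) : ℂ) • g j) := by
  have h := sum_smul_outer_right (n := n) Finset.univ (fun j => ((c j : ℝ) : ℂ)) g v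
  simpa [Complex.conj_ofReal] using h

section
variable {d : ℕ} (lam : Fin d → ℝ) (phi : Fin d → Fin d → ℝ)

lemma dot_tv_tv (j k : Fin d) : star (tvD d j) ⬝ᵥ tvD d k = if j = k then 1 else 0 := by
  simp only [tvD]
  rw [dot_single_left, tensor_single]
  simp [Prod.ext_iff]

lemma dot_tv_psi (j : Fin d) :
    star (tvD d j) ⬝ᵥ psiVec d lam = ((Real.sqrt (lam j) : ℝ) : ℂ) := by
  simp only [tvD]
  rw [dot_single_left, psiVec_apply]
  simp

lemma dot_tv_ta (j α : Fin d) :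
    star (tvD d j) ⬝ᵥ taD d lam phi α
      = ((Real.sqrt (lam j) : ℝ) : ℂ) * ((1 / Real.sqrt d : ℝ) : ℂ) := by
  simp only [tvD, taD]
  rw [dot_single_left]
  show ahat d phi α j * psiAlpha d lam phi α j = _
  rw [ahat, psiAlpha]
  have e := exp_cancel ((phi j α : ℝ) : ℂ)
  linear_combination (((1 / Real.sqrt d : ℝ) : ℂ) * ((Real.sqrt (lam j) : ℝ) : ℂ)) * e

lemma dot_ta_psi (hlam : ∀ j, 0 ≤ lam j) (hsum : ∑ j, lam j = 1) (α : Fin d) :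
    star (taD d lam phi α) ⬝ᵥ psiVec d lam = ((1 / Real.sqrt d : ℝ) : ℂ) := by
  rw [dotProduct, Fintype.sum_prod_type]
  have h1 : ∀ j k : Fin d, star (taD d lam phi α) (j, k) * psiVec d lam (j, k)
      = if j = k then ((1 / Real.sqrt d : ℝ) : ℂ) * ((lam j : ℝ) : ℂ) else 0 := by
    intro j k
    simp only [Pi.star_apply, RCLike.star_def, taD, tensorVec, _root_.map_mul, conj_ahat,
      conj_psiAlpha, psiVec_apply]
    by_cases h : j = k
    · subst h
      simp only [eq_self_iff_true, if_true, ite_true]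
      have e := exp_cancel ((phi j α : ℝ) : ℂ)
      have hs' : ((Real.sqrt (lam j) : ℝ) : ℂ) * ((Real.sqrt (lam j) : ℝ) : ℂ)
          = ((lam j : ℝ) : ℂ) := by
        exact_mod_cast congrArg Complex.ofReal (Real.mul_self_sqrt (hlam j))
      linear_combination (((1 / Real.sqrt d : ℝ) : ℂ) * ((Real.sqrt (lam j) : ℝ) : ℂ)
          * ((Real.sqrt (lam j) : ℝ) : ℂ)) * e
        + ((1 / Real.sqrt d : ℝ) : ℂ) * hs'
    · simp [h]
  simp only [h1, Finset.sum_ite_eq, Finset.mem_univ, if_true]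
  rw [← Finset.mul_sum]
  have hsumC : (∑ j, ((lam j : ℝ) : ℂ)) = 1 := by
    exact_mod_cast congrArg Complex.ofReal hsum
  rw [hsumC, mul_one]

end

/-- Theorem 1, operator form:
`𝟙 − |ψ⟩⟨ψ| ≤ (𝟙 − P) + (𝟙 − Q)` in the Loewner order. -/
theorem stmt5 (d : ℕ) (hd : 1 ≤ d) (lam : Fin d → ℝ)
    (hlam : ∀ j, 0 ≤ lam j) (hsum : ∑ j, lam j = 1)
    (phi : Fin d → Fin d → ℝ)
    (hMUB : ∀ α β : Fin d,
      star (ahat d phi α) ⬝ᵥ ahat d phi β = if α = β then 1 else 0) :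
    (((1 - Pop d) + (1 - Qop d lam phi))
        - (1 - outer (psiVec d lam) (psiVec d lam))).PosSemidef := by
  -- Forms of P and Q as sums of outer products of tensor vectors
  have hPform : Pop d = ∑ j, outer (tvD d j) (tvD d j) := by
    rw [Pop]
    exact Finset.sum_congr rfl fun j _ => (outer_tensor _ _ _ _).symm
  have hQform : Qop d lam phi = ∑ α, outer (taD d lam phi α) (taD d lam phi α) := by
    rw [Qop]
    exact Finset.sum_congr rfl fun α _ => (outer_tensor _ _ _ _).symm
  -- Row orthonormality of the MUB matrix
  have hrows : ∀ j k : Fin d,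
      (∑ α, ahat d phi α j * (starRingEnd ℂ) (ahat d phi α k)) = if j = k then 1 else 0 := by
    have hU : (Matrix.of fun j α => ahat d phi α j)ᴴ * (Matrix.of fun j α => ahat d phi α j)
        = 1 := by
      ext α β
      have h := hMUB α β
      simpa [Matrix.mul_apply, Matrix.conjTranspose_apply, dotProduct, Matrix.one_apply]
        using h
    have hU' := mul_eq_one_comm.mp hU
    intro j k
    have h2 := congrFun (congrFun hU' j) k
    simpa [Matrix.mul_apply, Matrix.conjTranspose_apply, Matrix.one_apply] using h2
  -- χ = ψ
  have hone : ((1 / Real.sqrt d : ℝ) : ℂ) * ((Real.sqrt d : ℝ) : ℂ) = 1 := by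
    have hne : (Real.sqrt d) ≠ 0 :=
      Real.sqrt_ne_zero'.mpr (by exact_mod_cast Nat.lt_of_lt_of_le Nat.zero_lt_one hd)
    push_cast
    field_simp
  have hchi : (∑ α, ((1 / Real.sqrt d : ℝ) : ℂ) • taD d lam phi α) = psiVec d lam := by
    funext p
    obtain ⟨p1, p2⟩ := p
    simp only [Finset.sum_apply, Pi.smul_apply, smul_eq_mul, taD, tensorVec]
    have h1 : ∀ α, ((1 / Real.sqrt d : ℝ) : ℂ)
          * (ahat d phi α p1 * psiAlpha d lam phi α p2)
        = ((Real.sqrt (lam p2) : ℝ) : ℂ)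
          * (ahat d phi α p1 * (starRingEnd ℂ) (ahat d phi α p2)) := by
      intro α
      rw [psiAlpha_eq lam phi hd]
      linear_combination (((Real.sqrt (lam p2) : ℝ) : ℂ) * ahat d phi α p1
        * (starRingEnd ℂ) (ahat d phi α p2)) * hone
    simp only [h1]
    rw [← Finset.mul_sum, hrows p1 p2, psiVec_apply]
    by_cases h : p1 = p2 <;> simp [h]
  -- diagonal dot products
  have hdot_ta_ta : ∀ α β : Fin d,
      star (taD d lam phi α) ⬝ᵥ taD d lam phi β = if α = β then 1 else 0 := by
    intro α β
    simp only [taD]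
    rw [dot_tensor, hMUB α β]
    by_cases h : α = β
    · subst h
      rw [dot_psiAlpha_self lam phi hlam hsum α]
      simp
    · simp [h]
  -- products
  have hP2 : Pop d * Pop d = Pop d := by
    rw [hPform, Finset.sum_mul]
    simp only [Finset.mul_sum, outer_mul_outer, dot_tv_tv, ite_smul, one_smul, zero_smul,
      Finset.sum_ite_eq, Finset.mem_univ, if_true]
  have hQ2 : Qop d lam phi * Qop d lam phi = Qop d lam phi := by
    rw [hQform, Finset.sum_mul]
    simp only [Finset.mul_sum, outer_mul_outer, hdot_ta_ta, ite_smul, one_smul, zero_smul,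
      Finset.sum_ite_eq, Finset.mem_univ, if_true]
  have hR2 : outer (psiVec d lam) (psiVec d lam) * outer (psiVec d lam) (psiVec d lam)
      = outer (psiVec d lam) (psiVec d lam) := by
    rw [outer_mul_outer, dot_psi_self lam hlam hsum, one_smul]
  have hPR : Pop d * outer (psiVec d lam) (psiVec d lam)
      = outer (psiVec d lam) (psiVec d lam) := by
    rw [hPform, Finset.sum_mul]
    simp only [outer_mul_outer, dot_tv_psi]
    rw [sum_smul_outer_left]
    rfl
  have hQR : Qop d lam phi * outer (psiVec d lam) (psiVec d lam)
      = outer (psiVec d lam) (psiVec d lam) := by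
    rw [hQform, Finset.sum_mul]
    simp only [outer_mul_outer, dot_ta_psi lam phi hlam hsum]
    rw [sum_smul_outer_left, hchi]
  have hPQ : Pop d * Qop d lam phi = outer (psiVec d lam) (psiVec d lam) := by
    rw [hPform, hQform, Finset.sum_mul]
    have hj : ∀ j, outer (tvD d j) (tvD d j)
          * (∑ α, outer (taD d lam phi α) (taD d lam phi α))
        = ((Real.sqrt (lam j) : ℝ) : ℂ) • outer (tvD d j) (psiVec d lam) := by
      intro j
      rw [Finset.mul_sum]
      simp only [outer_mul_outer, dot_tv_ta, mul_smul]
      rw [← Finset.smul_sum]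
      congr 1
      rw [sum_smul_outer_right_real (fun _ => (1 / Real.sqrt d : ℝ)) (taD d lam phi) (tvD d j),
        hchi]
    simp only [hj]
    rw [sum_smul_outer_left]
    rfl
  -- Hermitian properties
  have hPH : (Pop d)ᴴ = Pop d := by
    rw [hPform, Matrix.conjTranspose_sum]
    exact Finset.sum_congr rfl fun j _ => outer_conjTranspose _ _
  have hQH : (Qop d lam phi)ᴴ = Qop d lam phi := by
    rw [hQform, Matrix.conjTranspose_sum]
    exact Finset.sum_congr rfl fun α _ => outer_conjTranspose _ _
  have hRH : (outer (psiVec d lam) (psiVec d lam))ᴴ = outer (psiVec d lam) (psiVec d lam) :=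
    outer_conjTranspose _ _
  -- mirror products
  have hRP : outer (psiVec d lam) (psiVec d lam) * Pop d
      = outer (psiVec d lam) (psiVec d lam) := by
    have h := congrArg Matrix.conjTranspose hPR
    rwa [Matrix.conjTranspose_mul, hPH, hRH] at h
  have hRQ : outer (psiVec d lam) (psiVec d lam) * Qop d lam phi
      = outer (psiVec d lam) (psiVec d lam) := by
    have h := congrArg Matrix.conjTranspose hQR
    rwa [Matrix.conjTranspose_mul, hQH, hRH] at h
  have hQP : Qop d lam phi * Pop d = outer (psiVec d lam) (psiVec d lam) := by
    have h := congrArg Matrix.conjTranspose hPQ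
    rwa [Matrix.conjTranspose_mul, hPH, hQH, hRH] at h
  -- M is a Hermitian idempotent
  have hM2 : (1 + outer (psiVec d lam) (psiVec d lam) - Pop d - Qop d lam phi)
        * (1 + outer (psiVec d lam) (psiVec d lam) - Pop d - Qop d lam phi)
      = 1 + outer (psiVec d lam) (psiVec d lam) - Pop d - Qop d lam phi := by
    simp only [mul_sub, mul_add, sub_mul, add_mul, mul_one, one_mul,
      hP2, hQ2, hR2, hPR, hRP, hQR, hRQ, hPQ, hQP]
    abel
  have hMH : (1 + outer (psiVec d lam) (psiVec d lam) - Pop d - Qop d lam phi)ᴴ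
      = 1 + outer (psiVec d lam) (psiVec d lam) - Pop d - Qop d lam phi := by
    simp only [Matrix.conjTranspose_sub, Matrix.conjTranspose_add, Matrix.conjTranspose_one,
      hPH, hQH, hRH]
  have key := Matrix.posSemidef_conjTranspose_mul_self
    (1 + outer (psiVec d lam) (psiVec d lam) - Pop d - Qop d lam phi)
  rw [hMH, hM2] at key
  have hfinal : ((1 - Pop d) + (1 - Qop d lam phi))
        - (1 - outer (psiVec d lam) (psiVec d lam))
      = 1 + outer (psiVec d lam) (psiVec d lam) - Pop d - Qop d lam phi := by
    abel
  rw [hfinal]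
  exact key
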